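/- The operator 𝔭 is polynomial preserving: if u : ℝ³ → ℝ is a polynomial function of total degree at most r, then there exist polynomial functions q₁, q₂, q₃ : ℝ³ → ℝ, each of total degree at most r+1, such that (𝔭u)(x) = (q₁(x), q₂(x), q₃(x)) for all x ∈ ℝ³; that is, 𝔭(P_r) ⊆ 𝐏_{r+1}. -/

import Mathlib

open MeasureTheory

/-- Divergence of a vector field on ℝ³. -/
noncomputable def pdiv (v : (Fin 3 → ℝ) → (Fin 3 → ℝ)) (x : Fin 3 → ℝ) : ℝ :=
  ∑ i : Fin 3, fderiv ℝ (fun y => v y i) x (Pi.single i 1)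

/-- Curl of a vector field on ℝ³. -/
noncomputable def pcurl (v : (Fin 3 → ℝ) → (Fin 3 → ℝ)) (x : Fin 3 → ℝ) : Fin 3 → ℝ :=
  ![fderiv ℝ (fun y => v y 2) x (Pi.single 1 1) - fderiv ℝ (fun y => v y 1) x (Pi.single 2 1),
    fderiv ℝ (fun y => v y 0) x (Pi.single 2 1) - fderiv ℝ (fun y => v y 2) x (Pi.single 0 1),
    fderiv ℝ (fun y => v y 1) x (Pi.single 0 1) - fderiv ℝ (fun y => v y 0) x (Pi.single 1 1)]

/-- Gradient of a scalar field on ℝ³. -/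
noncomputable def pgrad (p : (Fin 3 → ℝ) → ℝ) (x : Fin 3 → ℝ) : Fin 3 → ℝ :=
  fun i => fderiv ℝ p x (Pi.single i 1)

/-- The Poincaré-type operator 𝔭: (𝔭u)(x) = (∫₀¹ t² u(tx) dt) x. -/
noncomputable def poin (u : (Fin 3 → ℝ) → ℝ) (x : Fin 3 → ℝ) : Fin 3 → ℝ :=
  (∫ t in (0:ℝ)..1, t ^ 2 * u (t • x)) • x

/-- `u` is a polynomial function of total degree at most `r` (P_r = {0} if r < 0). -/
def IsPolyDeg (r : ℤ) (u : (Fin 3 → ℝ) → ℝ) : Prop :=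
  ∃ p : MvPolynomial (Fin 3) ℝ, (p = 0 ∨ (p.totalDegree : ℤ) ≤ r) ∧
    ∀ x, MvPolynomial.eval x p = u x

/-- `v` is a vector field with polynomial components of total degree at most `r`. -/
def IsVecPolyDeg (r : ℤ) (v : (Fin 3 → ℝ) → (Fin 3 → ℝ)) : Prop :=
  ∀ i, IsPolyDeg r fun x => v x i

/-- `u` is a polynomial function. -/
def IsPolyFun (u : (Fin 3 → ℝ) → ℝ) : Prop :=
  ∃ p : MvPolynomial (Fin 3) ℝ, ∀ x, MvPolynomial.eval x p = u x

/-- Membership in S_k = {p ∈ (P̃_k)³ : x·p(x) = 0}. -/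
def MemS (k : ℕ) (v : (Fin 3 → ℝ) → (Fin 3 → ℝ)) : Prop :=
  (∀ i, ∃ p : MvPolynomial (Fin 3) ℝ, p.IsHomogeneous k ∧ ∀ x, MvPolynomial.eval x p = v x i) ∧
    ∀ x, ∑ i : Fin 3, x i * v x i = 0

/-- Membership in the first-family Nédélec space R_k = 𝐏_{k-1} ⊕ S_k. -/
def MemR (k : ℕ) (v : (Fin 3 → ℝ) → (Fin 3 → ℝ)) : Prop :=
  ∃ v₁ v₂, IsVecPolyDeg ((k : ℤ) - 1) v₁ ∧ MemS k v₂ ∧ v = v₁ + v₂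

lemma eval_smul_homog {φ : MvPolynomial (Fin 3) ℝ} {n : ℕ} (h : φ.IsHomogeneous n)
    (t : ℝ) (x : Fin 3 → ℝ) :
    MvPolynomial.eval (t • x) φ = t ^ n * MvPolynomial.eval x φ := by
  rw [MvPolynomial.eval_eq', MvPolynomial.eval_eq', Finset.mul_sum]
  apply Finset.sum_congr rfl
  intro d hd
  have hdeg : ∑ i : Fin 3, d i = n := by
    have := h (MvPolynomial.mem_support_iff.mp hd)
    simp only [Finsupp.weight_apply, Finsupp.sum, Pi.one_apply, smul_eq_mul, mul_one] at this
    rw [← this]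
    exact (Finset.sum_subset (Finset.subset_univ _) (fun i _ hi => by
      simpa using Finsupp.notMem_support_iff.mp hi)).symm
  simp only [Pi.smul_apply, smul_eq_mul, mul_pow]
  rw [Finset.prod_mul_distrib, Finset.prod_pow_eq_pow_sum, hdeg]
  ring

/-- 𝔭 is polynomial preserving: 𝔭(P_r) ⊆ 𝐏_{r+1}. -/
theorem stmt_2 (r : ℕ) (u : (Fin 3 → ℝ) → ℝ) (hu : IsPolyDeg (r : ℤ) u) :
    ∃ q : Fin 3 → (Fin 3 → ℝ) → ℝ, (∀ i, IsPolyDeg ((r : ℤ) + 1) (q i)) ∧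
      ∀ x i, poin u x i = q i x := by
  classical
  obtain ⟨p, hdeg, hev⟩ := hu
  rcases hdeg with h0 | hdeg
  · -- p = 0, so u = 0
    refine ⟨fun _ _ => 0, fun i => ⟨0, Or.inl rfl, fun x => by simp⟩, fun x i => ?_⟩
    have hu0 : ∀ y, u y = 0 := fun y => by rw [← hev y, h0]; simp
    simp [poin, hu0]
  · set N := p.totalDegree with hN
    have hNr : (N : ℤ) ≤ r := hdeg
    -- define the polynomial
    set S : MvPolynomial (Fin 3) ℝ :=
      ∑ d ∈ Finset.range (N + 1),
        MvPolynomial.C (((d : ℝ) + 3)⁻¹) * MvPolynomial.homogeneousComponent d p with hS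
    refine ⟨fun i x => MvPolynomial.eval x (S * MvPolynomial.X i), ?_, ?_⟩
    · intro i
      refine ⟨S * MvPolynomial.X i, ?_, fun x => rfl⟩
      right
      have hSdeg : S.totalDegree ≤ N := by
        refine (MvPolynomial.totalDegree_finset_sum _ _).trans ?_
        apply Finset.sup_le
        intro d hd
        refine (MvPolynomial.totalDegree_mul _ _).trans ?_
        simp only [MvPolynomial.totalDegree_C, zero_add]
        exact ((MvPolynomial.homogeneousComponent_isHomogeneous d p).totalDegree_le).trans
          (Nat.lt_succ_iff.mp (Finset.mem_range.mp hd))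
      calc ((S * MvPolynomial.X i).totalDegree : ℤ)
          ≤ ((S.totalDegree + (MvPolynomial.X i : MvPolynomial (Fin 3) ℝ).totalDegree : ℕ) : ℤ) :=
            by exact_mod_cast MvPolynomial.totalDegree_mul _ _
        _ ≤ (N : ℤ) + 1 := by
            rw [MvPolynomial.totalDegree_X]; exact_mod_cast add_le_add_left hSdeg 1
        _ ≤ (r : ℤ) + 1 := add_le_add_left hNr 1
    · intro x i
      have key : (∫ t in (0:ℝ)..1, t ^ 2 * u (t • x)) = MvPolynomial.eval x S := by
        have hrep : ∀ t : ℝ, t ^ 2 * u (t • x) =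
            ∑ d ∈ Finset.range (N + 1),
              MvPolynomial.eval x (MvPolynomial.homogeneousComponent d p) * t ^ (d + 2) := by
          intro t
          rw [← hev (t • x)]
          conv_lhs => rw [← MvPolynomial.sum_homogeneousComponent p]
          rw [map_sum, Finset.mul_sum]
          apply Finset.sum_congr rfl
          intro d _
          rw [eval_smul_homog (MvPolynomial.homogeneousComponent_isHomogeneous d p)]
          ring
        rw [intervalIntegral.integral_congr (g := fun t =>
            ∑ d ∈ Finset.range (N + 1),
              MvPolynomial.eval x (MvPolynomial.homogeneousComponent d p) * t ^ (d + 2))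
            (fun t _ => hrep t)]
        rw [intervalIntegral.integral_finset_sum (fun d _ =>
          (intervalIntegral.intervalIntegrable_pow (d + 2)).const_mul _)]
        rw [hS, map_sum]
        apply Finset.sum_congr rfl
        intro d _
        rw [intervalIntegral.integral_const_mul, integral_pow]
        simp only [MvPolynomial.eval_mul, MvPolynomial.eval_C]
        push_cast
        ring
      simp only [poin, Pi.smul_apply, smul_eq_mul, key, MvPolynomial.eval_mul,
        MvPolynomial.eval_X]
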